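/- lim_{n→∞} β(n, 2n) = 5/2, where β(n,M) is the minimum average Hamming distance of a binary code of length n and size M. In particular, for all n, 5/2 − (4n−2)/n² ≥ β(n,2n) ≥ 5/2 − 13/(2n) for n large enough. -/

import Mathlib

open Finset

noncomputable def avgDist (n : ℕ) (C : Finset (Fin n → Bool)) : ℝ :=
  (1 / (C.card : ℝ) ^ 2) * ∑ c ∈ C, ∑ c' ∈ C, (hammingDist c c' : ℝ)

noncomputable def beta (n M : ℕ) : ℝ :=
  sInf {x : ℝ | ∃ C : Finset (Fin n → Bool), C.card = M ∧ avgDist n C = x}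

namespace S19
variable {n : ℕ}

def colw (C : Finset (Fin n → Bool)) (i : Fin n) : ℕ := #(C.filter fun c => c i = true)

def wt (c : Fin n → Bool) : ℕ := #(univ.filter fun i => c i = true)




lemma sum_colw (C : Finset (Fin n → Bool)) (J : Finset (Fin n)) :
    ∑ i ∈ J, colw C i = ∑ c ∈ C, #(J.filter fun i => c i = true) := by
  simp only [colw, card_filter]
  exact Finset.sum_comm

lemma colw_le (C : Finset (Fin n → Bool)) (i : Fin n) : colw C i ≤ #C :=
  card_le_card (filter_subset _ _)

lemma colw_compl (C : Finset (Fin n → Bool)) (i : Fin n) :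
    colw C i + #(C.filter fun c => c i = false) = #C := by
  have := card_filter_add_card_filter_not (s := C) (p := fun c => c i = true)
  simpa [colw] using this

lemma pair_count (C : Finset (Fin n → Bool)) (i : Fin n) :
    ∑ c ∈ C, ∑ c' ∈ C, (if c i ≠ c' i then 1 else 0)
      = 2 * colw C i * (#C - colw C i) := by
  have hsplit : ∀ c : Fin n → Bool,
      (∑ c' ∈ C, if c i ≠ c' i then 1 else 0)
        = if c i = true then #(C.filter fun c' => c' i = false) else colw C i := by
    intro c
    by_cases h : c i = true
    · rw [if_pos h, card_filter]
      apply Finset.sum_congr rfl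
      intro c' _
      simp [h]
    · have h' : c i = false := by simpa using h
      rw [if_neg h, colw, card_filter]
      apply Finset.sum_congr rfl
      intro c' _
      simp [h']
  rw [Finset.sum_congr rfl (fun c _ => hsplit c), Finset.sum_ite, Finset.sum_const,
    Finset.sum_const]
  have hcompl := colw_compl C i
  have : #(C.filter fun c => ¬ (c i = true)) = #(C.filter fun c => c i = false) := by
    congr 1
    apply filter_congr
    intro c _
    simp
  rw [this]
  have h2 : #(C.filter fun c => c i = true) = colw C i := rfl
  rw [h2, ← hcompl, smul_eq_mul, smul_eq_mul, Nat.add_sub_cancel_left]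
  ring

lemma dist_sum (C : Finset (Fin n → Bool)) :
    ∑ c ∈ C, ∑ c' ∈ C, hammingDist c c'
      = ∑ i : Fin n, 2 * colw C i * (#C - colw C i) := by
  have h1 : ∀ c c' : Fin n → Bool,
      hammingDist c c' = ∑ i : Fin n, (if c i ≠ c' i then 1 else 0) := by
    intro c c'
    rw [hammingDist, card_filter]
  calc ∑ c ∈ C, ∑ c' ∈ C, hammingDist c c'
      = ∑ c ∈ C, ∑ c' ∈ C, ∑ i : Fin n, (if c i ≠ c' i then 1 else 0) := by
        simp only [h1]
    _ = ∑ c ∈ C, ∑ i : Fin n, ∑ c' ∈ C, (if c i ≠ c' i then 1 else 0) := by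
        apply Finset.sum_congr rfl
        intro c _
        exact Finset.sum_comm
    _ = ∑ i : Fin n, ∑ c ∈ C, ∑ c' ∈ C, (if c i ≠ c' i then 1 else 0) := Finset.sum_comm
    _ = ∑ i : Fin n, 2 * colw C i * (#C - colw C i) := by
        apply Finset.sum_congr rfl
        intro i _
        exact pair_count C i



def flip (b : Fin n → Bool) (c : Fin n → Bool) : Fin n → Bool := fun i => xor (c i) (b i)

lemma flip_flip (b : Fin n → Bool) : ∀ c, flip b (flip b c) = c := by
  intro c; funext i; simp [flip]

lemma flip_inj (b : Fin n → Bool) : Function.Injective (flip b) :=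
  Function.Involutive.injective (flip_flip b)

lemma hamming_flip (b c c' : Fin n → Bool) :
    hammingDist (flip b c) (flip b c') = hammingDist c c' := by
  unfold hammingDist
  congr 1
  apply filter_congr
  intro i _
  simp only [flip]
  cases hb : b i <;> simp

lemma card_flip (C : Finset (Fin n → Bool)) (b : Fin n → Bool) :
    #(C.image (flip b)) = #C := card_image_of_injective C (flip_inj b)

lemma sum_hamming_flip (C : Finset (Fin n → Bool)) (b : Fin n → Bool) :
    ∑ c ∈ C.image (flip b), ∑ c' ∈ C.image (flip b), hammingDist c c'
      = ∑ c ∈ C, ∑ c' ∈ C, hammingDist c c' := by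
  rw [Finset.sum_image (fun x _ y _ h => flip_inj b h)]
  apply Finset.sum_congr rfl
  intro c _
  rw [Finset.sum_image (fun x _ y _ h => flip_inj b h)]
  apply Finset.sum_congr rfl
  intro c' _
  exact hamming_flip b c c'


lemma colw_flip_le (C : Finset (Fin n → Bool))
    (b : Fin n → Bool) (hb : ∀ i, b i = decide (2 * colw C i > #C)) (i : Fin n) :
    2 * colw (C.image (flip b)) i ≤ #C := by
  have key : (C.image (flip b)).filter (fun c => c i = true)
      = (C.filter fun c => flip b c i = true).image (flip b) := by
    ext c
    simp only [mem_filter, mem_image]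
    constructor
    · rintro ⟨⟨a, ha, rfl⟩, h2⟩
      exact ⟨a, ⟨ha, h2⟩, rfl⟩
    · rintro ⟨a, ⟨ha, h2⟩, rfl⟩
      exact ⟨⟨a, ha, rfl⟩, h2⟩
  rw [colw, key, card_image_of_injective _ (flip_inj b)]
  by_cases h : 2 * colw C i > #C
  · have hbi : b i = true := by rw [hb i]; simpa using h
    have : (C.filter fun c => flip b c i = true) = C.filter fun c => c i = false := by
      apply filter_congr; intro c _; simp [flip, hbi]
    rw [this]
    have hc := card_filter_add_card_filter_not (s := C) (p := fun c => c i = true)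
    have : #(C.filter fun c => ¬ (c i = true)) = #(C.filter fun c => c i = false) := by
      congr 1; apply filter_congr; intro c _; simp
    rw [this] at hc
    have h2 : #C < 2 * #(C.filter fun c => c i = true) := h
    linarith
  · have hbi : b i = false := by rw [hb i]; simpa using h
    have : (C.filter fun c => flip b c i = true) = C.filter fun c => c i = true := by
      apply filter_congr; intro c _; simp [flip, hbi]
    rw [this]
    have h2 : ¬ (#C < 2 * #(C.filter fun c => c i = true)) := h
    push_neg at h2
    linarith






lemma zero_off (I : Finset (Fin n)) (c : Fin n → Bool)
    (hc : #((univ \ I).filter fun i => c i = true) = 0) {j : Fin n} (hj : j ∉ I) :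
    c j = false := by
  rw [Finset.card_eq_zero] at hc
  by_contra hb
  have hjf : j ∈ (univ \ I).filter fun i => c i = true := by
    simp only [mem_filter, mem_sdiff, mem_univ, true_and]
    exact ⟨hj, by revert hb; cases c j <;> simp⟩
  rw [hc] at hjf
  exact absurd hjf (notMem_empty j)

lemma restr_count (D : Finset (Fin n → Bool)) (I : Finset (Fin n)) :
    #(D.filter fun c => #((univ \ I).filter fun i => c i = true) = 0) ≤ 2 ^ #I := by
  classical
  have h : #(D.filter fun c => #((univ \ I).filter fun i => c i = true) = 0)
      ≤ #(univ : Finset ({ x // x ∈ I } → Bool)) := by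
    apply card_le_card_of_injOn (fun c => fun i : { x // x ∈ I } => c i.1)
    · intro c _; exact mem_univ _
    · intro c hc c' hc' hcc
      simp only [coe_filter, Set.mem_setOf_eq] at hc hc'
      funext j
      by_cases hj : j ∈ I
      · exact congrFun hcc ⟨j, hj⟩
      · rw [zero_off I c hc.2 hj, zero_off I c' hc'.2 hj]
  calc #(D.filter fun c => #((univ \ I).filter fun i => c i = true) = 0)
      ≤ #(univ : Finset ({ x // x ∈ I } → Bool)) := h
    _ = 2 ^ #I := by
        rw [card_univ]
        rw [Fintype.card_fun]
        simp [Fintype.card_coe]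

lemma tail_bound (D : Finset (Fin n → Bool)) (I : Finset (Fin n)) :
    #D ≤ 2 ^ #I + ∑ i ∈ univ \ I, colw D i := by
  classical
  rw [sum_colw]
  have hsplit := card_filter_add_card_filter_not (s := D)
    (p := fun c => #((univ \ I).filter fun i => c i = true) = 0)
  have h2 : #(D.filter fun c => ¬ (#((univ \ I).filter fun i => c i = true) = 0))
      ≤ ∑ c ∈ D, #((univ \ I).filter fun i => c i = true) := by
    rw [card_filter]
    apply Finset.sum_le_sum
    intro c _
    by_cases hc : #((univ \ I).filter fun i => c i = true) = 0
    · simp [hc]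
    · rw [if_pos hc]
      exact Nat.one_le_iff_ne_zero.mpr hc
  have h1 := restr_count D I
  calc #D = _ + _ := hsplit.symm
    _ ≤ 2 ^ #I + ∑ c ∈ D, #((univ \ I).filter fun i => c i = true) := by
        exact Nat.add_le_add h1 h2



lemma wt_le_one_char (c : Fin n → Bool) (h : wt c ≤ 1) :
    c = (fun _ => false) ∨ ∃ j : Fin n, c = fun i => decide (i = j) := by
  rcases Nat.lt_or_ge (wt c) 1 with h0 | h1
  · left
    have h0' : #(univ.filter fun i => c i = true) = 0 := by
      unfold wt at h0; omega
    rw [Finset.card_eq_zero] at h0'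
    funext i
    by_contra hb
    have : i ∈ univ.filter fun i => c i = true := by
      simp only [mem_filter, mem_univ, true_and]
      revert hb; cases c i <;> simp
    rw [h0'] at this
    exact absurd this (notMem_empty i)
  · right
    have h1' : #(univ.filter fun i => c i = true) = 1 := le_antisymm h h1
    rw [Finset.card_eq_one] at h1'
    obtain ⟨j, hj⟩ := h1'
    refine ⟨j, funext fun i => ?_⟩
    by_cases hij : i = j
    · subst hij
      have : i ∈ univ.filter fun i => c i = true := by rw [hj]; exact mem_singleton_self i
      simp only [mem_filter] at this
      simp [this.2]
    · have : c i ≠ true := by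
        intro hb
        have : i ∈ univ.filter fun i => c i = true := by
          simp only [mem_filter, mem_univ, true_and]; exact hb
        rw [hj] at this
        exact hij (mem_singleton.mp this)
      simp [hij]
      revert this; cases c i <;> simp

lemma card_wt_le_one (D : Finset (Fin n → Bool)) :
    #(D.filter fun c => wt c ≤ 1) ≤ n + 1 := by
  classical
  have hsub : (D.filter fun c => wt c ≤ 1)
      ⊆ insert (fun _ => false) (univ.image fun j : Fin n => fun i => decide (i = j)) := by
    intro c hc
    simp only [mem_filter] at hc
    rcases wt_le_one_char c hc.2 with h | ⟨j, h⟩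
    · rw [h]; exact mem_insert_self _ _
    · apply mem_insert_of_mem
      rw [h]
      exact mem_image_of_mem _ (mem_univ j)
  calc #(D.filter fun c => wt c ≤ 1) ≤ _ := card_le_card hsub
    _ ≤ #(univ.image fun j : Fin n => fun i => decide (i = j)) + 1 := card_insert_le _ _
    _ ≤ #(univ : Finset (Fin n)) + 1 := by
        have := card_image_le (s := (univ : Finset (Fin n)))
          (f := fun j : Fin n => fun i => decide (i = j))
        exact Nat.add_le_add_right this 1
    _ = n + 1 := by rw [card_univ, Fintype.card_fin]

lemma two_le_aux (m a b : ℕ) (ha : a = (if m = 0 then 1 else 0)) (hb : b = (if m ≤ 1 then 1 else 0)) :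
    2 ≤ m + a + b := by
  rcases m with _ | _ | m <;> simp at ha hb <;> omega

lemma sum_wt_ge (D : Finset (Fin n → Bool)) :
    2 * #D ≤ (∑ c ∈ D, wt c) + #(D.filter fun c => wt c = 0) + #(D.filter fun c => wt c ≤ 1) := by
  classical
  rw [card_filter, card_filter, ← Finset.sum_add_distrib, ← Finset.sum_add_distrib]
  have : 2 * #D = ∑ _c ∈ D, 2 := by rw [Finset.sum_const, smul_eq_mul]; ring
  rw [this]
  apply Finset.sum_le_sum
  intro c _
  exact two_le_aux (wt c) _ _ rfl rfl

lemma card_wt_zero (D : Finset (Fin n → Bool)) :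
    #(D.filter fun c => wt c = 0) ≤ 1 := by
  classical
  have hsub : (D.filter fun c => wt c = 0) ⊆ {fun _ => false} := by
    intro c hc
    simp only [mem_filter] at hc
    rcases wt_le_one_char c (by omega) with h | ⟨j, h⟩
    · rw [h]; exact mem_singleton_self _
    · exfalso
      have : wt c = 0 := hc.2
      unfold wt at this
      rw [Finset.card_eq_zero] at this
      have hj : j ∈ univ.filter fun i => c i = true := by
        simp only [mem_filter, mem_univ, true_and, h]
        simp
      rw [this] at hj
      exact absurd hj (notMem_empty j)
  calc #(D.filter fun c => wt c = 0) ≤ #({fun _ => false} : Finset (Fin n → Bool)) := card_le_card hsub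
    _ = 1 := card_singleton _

lemma wt_sum_bound (D : Finset (Fin n → Bool)) (hD : #D = 2 * n) :
    3 * n ≤ (∑ i : Fin n, colw D i) + 2 := by
  classical
  have h0 : ∑ i : Fin n, colw D i = ∑ c ∈ D, wt c := sum_colw D univ
  have h1 := sum_wt_ge D
  have h2 := card_wt_zero D
  have h3 := card_wt_le_one D
  rw [hD] at h1
  rw [h0]
  linarith

lemma masterIneq (N x y z S : ℝ) (hn : 100 ≤ N) (hz : 0 ≤ z) (hzy : z ≤ y) (hyx : y ≤ x)
    (hxn : x ≤ N) (hS1 : 3*N ≤ S + 2) (hS2 : S + 13 ≤ 5*N)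
    (hxyz : x + y + z + 2*N ≤ S + 8) :
    10*N^2 - 26*N ≤ 4*N*S - 2*(x^2 + y^2 + z*(S - x - y)) := by
  nlinarith [mul_nonneg hz (sub_nonneg.2 hzy), mul_nonneg (sub_nonneg.2 hyx) (sub_nonneg.2 hzy),
    sq_nonneg (x - N), sq_nonneg (y - z), mul_nonneg hz hz, sq_nonneg (x+y-N),
    mul_nonneg (sub_nonneg.2 hxn) (sub_nonneg.2 hyx)]

set_option maxHeartbeats 1000000 in
lemma key (hn : 100 ≤ n) (D : Finset (Fin n → Bool)) (hD : #D = 2 * n)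
    (hw : ∀ i, 2 * colw D i ≤ #D) :
    (10 * (n:ℝ)^2 - 26 * n) ≤ ∑ c ∈ D, ∑ c' ∈ D, (hammingDist c c' : ℝ) := by
  classical
  -- top three columns
  have hne1 : (univ : Finset (Fin n)).Nonempty := by
    rw [← card_pos, card_univ, Fintype.card_fin]; omega
  obtain ⟨i₁, _, hmax1⟩ := Finset.exists_max_image univ (colw D) hne1
  have hne2 : (univ.erase i₁).Nonempty := by
    rw [← card_pos, card_erase_of_mem (mem_univ i₁), card_univ, Fintype.card_fin]; omega
  obtain ⟨i₂, hi₂, hmax2⟩ := Finset.exists_max_image (univ.erase i₁) (colw D) hne2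
  have hne3 : ((univ.erase i₁).erase i₂).Nonempty := by
    rw [← card_pos, card_erase_of_mem hi₂, card_erase_of_mem (mem_univ i₁), card_univ,
      Fintype.card_fin]; omega
  obtain ⟨i₃, hi₃, hmax3⟩ := Finset.exists_max_image ((univ.erase i₁).erase i₂) (colw D) hne3
  set w : Fin n → ℕ := colw D with hwdef
  set U2 := (univ.erase i₁).erase i₂ with hU2
  -- index facts
  have h21 : i₂ ≠ i₁ := (mem_erase.mp hi₂).1
  have h32 : i₃ ≠ i₂ := (mem_erase.mp hi₃).1
  have h31 : i₃ ≠ i₁ := (mem_erase.mp (mem_erase.mp hi₃).2).1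
  -- sum decompositions
  have hdec1 : ∑ i ∈ univ.erase i₁, w i + w i₁ = ∑ i : Fin n, w i :=
    Finset.sum_erase_add _ _ (mem_univ i₁)
  have hdec2 : ∑ i ∈ U2, w i + w i₂ = ∑ i ∈ univ.erase i₁, w i :=
    Finset.sum_erase_add _ _ hi₂
  have hdec3 : ∑ i ∈ U2.erase i₃, w i + w i₃ = ∑ i ∈ U2, w i :=
    Finset.sum_erase_add _ _ hi₃
  set S := ∑ i : Fin n, w i with hSdef
  -- tail bounds
  have hI2 : univ \ ({i₁, i₂} : Finset (Fin n)) = U2 := by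
    ext x; simp only [mem_sdiff, mem_univ, true_and, mem_insert, mem_singleton, hU2, mem_erase]
    tauto
  have hI2card : #({i₁, i₂} : Finset (Fin n)) = 2 := by
    rw [card_insert_of_notMem (by simp [h21.symm]), card_singleton]
  have hI3 : univ \ ({i₁, i₂, i₃} : Finset (Fin n)) = U2.erase i₃ := by
    ext x; simp only [mem_sdiff, mem_univ, true_and, mem_insert, mem_singleton, hU2, mem_erase]
    tauto
  have hI3card : #({i₁, i₂, i₃} : Finset (Fin n)) = 3 := by
    rw [card_insert_of_notMem (by simp [h21.symm, h31.symm]),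
      card_insert_of_notMem (by simp [h32.symm]), card_singleton]
  have hxy : 2 * n ≤ 4 + ∑ i ∈ U2, w i := by
    have := tail_bound D ({i₁, i₂} : Finset (Fin n))
    rw [hI2, hI2card, hD] at this
    simpa using this
  have hxyz : 2 * n ≤ 8 + ∑ i ∈ U2.erase i₃, w i := by
    have := tail_bound D ({i₁, i₂, i₃} : Finset (Fin n))
    rw [hI3, hI3card, hD] at this
    simpa using this
  have hS1 : 3 * n ≤ S + 2 := wt_sum_bound D hD
  have hwn : ∀ i, w i ≤ n := by
    intro i; have h := hw i; rw [hD] at h; omega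
  -- ℕ-level assembly
  have hdec : w i₁ + w i₂ + ∑ i ∈ U2, w i = S := by omega
  have hdec' : w i₁ + w i₂ + w i₃ + ∑ i ∈ U2.erase i₃, w i = S := by omega
  have hSle : S ≤ 5 * n ∨ 5 * n ≤ S := le_total _ _
  -- cast to ℝ
  have hcast : ∑ c ∈ D, ∑ c' ∈ D, (hammingDist c c' : ℝ)
      = ∑ i : Fin n, (2 * (w i : ℝ) * (2 * n - w i)) := by
    have h1 : ∑ c ∈ D, ∑ c' ∈ D, (hammingDist c c' : ℝ)
        = ((∑ c ∈ D, ∑ c' ∈ D, hammingDist c c' : ℕ) : ℝ) := by push_cast; rfl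
    rw [h1, dist_sum D, hD, Nat.cast_sum]
    apply Finset.sum_congr rfl
    intro i _
    have h2 : w i ≤ 2 * n := le_trans (hwn i) (by omega)
    rw [hwdef] at h2
    push_cast [Nat.cast_sub h2, hwdef]
    ring
  rw [hcast]
  have hSr' : ((S:ℕ) : ℝ) = ∑ i : Fin n, (w i : ℝ) := by rw [hSdef]; push_cast; rfl
  have hsum_split : ∑ i : Fin n, (2 * (w i : ℝ) * (2 * n - w i))
      = 4 * n * (S:ℝ) - 2 * ∑ i : Fin n, (w i : ℝ)^2 := by
    have hptw : ∀ i : Fin n, 2 * (w i : ℝ) * (2 * n - w i)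
        = 4 * n * (w i : ℝ) - 2 * (w i : ℝ)^2 := by intro i; ring
    rw [Finset.sum_congr rfl (fun i _ => hptw i), Finset.sum_sub_distrib, ← Finset.mul_sum,
      ← Finset.mul_sum, ← hSr']
  rw [hsum_split]
  have hT2 : (∑ i ∈ U2, ((w i:ℕ):ℝ)) = (S:ℝ) - w i₁ - w i₂ := by
    have h0 : ((∑ i ∈ U2, w i : ℕ) : ℝ) = ∑ i ∈ U2, ((w i:ℕ):ℝ) := by push_cast; rfl
    have h1 : ((w i₁ : ℕ):ℝ) + w i₂ + ((∑ i ∈ U2, w i : ℕ) : ℝ) = (S:ℝ) := by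
      exact_mod_cast congrArg (fun k : ℕ => (k : ℝ)) hdec
    linarith [h0.symm.le, h0.le]
  have hQtail : ∑ i ∈ U2, ((w i:ℕ):ℝ)^2 ≤ (w i₃ : ℝ) * ((S:ℝ) - w i₁ - w i₂) := by
    rw [← hT2, Finset.mul_sum]
    apply Finset.sum_le_sum
    intro i hi
    have h1' : ((w i:ℕ) : ℝ) ≤ (w i₃ : ℝ) := Nat.cast_le.mpr (hmax3 i hi)
    have h2 : (0:ℝ) ≤ ((w i:ℕ):ℝ) := Nat.cast_nonneg _
    nlinarith
  have hQdec : ∑ i : Fin n, ((w i:ℕ):ℝ)^2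
      = ((w i₁:ℕ):ℝ)^2 + ((w i₂:ℕ):ℝ)^2 + ∑ i ∈ U2, ((w i:ℕ):ℝ)^2 := by
    rw [← Finset.sum_erase_add _ _ (mem_univ i₁), ← Finset.sum_erase_add _ _ hi₂]
    ring
  have hQ : ∑ i : Fin n, ((w i:ℕ):ℝ)^2
      ≤ ((w i₁:ℕ):ℝ)^2 + ((w i₂:ℕ):ℝ)^2 + (w i₃:ℝ) * ((S:ℝ) - w i₁ - w i₂) := by
    rw [hQdec]; linarith
  -- real constraints
  have hYX : ((w i₂:ℕ):ℝ) ≤ ((w i₁:ℕ):ℝ) := Nat.cast_le.mpr (hmax1 i₂ (mem_univ i₂))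
  have hZY : ((w i₃:ℕ):ℝ) ≤ ((w i₂:ℕ):ℝ) := Nat.cast_le.mpr (hmax2 i₃ (mem_erase.mp hi₃).2)
  have hZ0 : (0:ℝ) ≤ ((w i₃:ℕ):ℝ) := Nat.cast_nonneg _
  have hXn : ((w i₁:ℕ):ℝ) ≤ (n:ℝ) := Nat.cast_le.mpr (hwn i₁)
  have hS1r : 3 * (n:ℝ) ≤ (S:ℝ) + 2 := by exact_mod_cast hS1
  have hnr : (100:ℝ) ≤ (n:ℝ) := by exact_mod_cast hn
  have hxyzn : 2 * n + (w i₁ + w i₂ + w i₃) ≤ 8 + S := by omega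
  have hxyzr : ((w i₁:ℕ):ℝ) + w i₂ + w i₃ + 2*(n:ℝ) ≤ (S:ℝ) + 8 := by
    have := (Nat.cast_le (α := ℝ)).mpr hxyzn
    push_cast at this
    linarith
  rcases hSle with hcase | hcase
  · -- small S : master inequality
    rcases le_total (5 * n) (S + 13) with hc2 | hc2
    · -- S ≥ 5n - 13 : easy bound
      have hc2r : 5 * (n:ℝ) ≤ (S:ℝ) + 13 := by exact_mod_cast hc2
      have hQn : ∑ i : Fin n, ((w i:ℕ):ℝ)^2 ≤ (n:ℝ) * (S:ℝ) := by
        rw [hSr', Finset.mul_sum]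
        apply Finset.sum_le_sum
        intro i _
        have h1' : ((w i:ℕ) : ℝ) ≤ (n : ℝ) := Nat.cast_le.mpr (hwn i)
        have h2 : (0:ℝ) ≤ ((w i:ℕ):ℝ) := Nat.cast_nonneg _
        nlinarith
      have hp : (0:ℝ) ≤ ((S:ℝ) + 13 - 5*n) * (n:ℝ) :=
        mul_nonneg (by linarith) (by linarith)
      nlinarith [hQn, hp]
    · have hc2r : (S:ℝ) + 13 ≤ 5 * (n:ℝ) := by exact_mod_cast hc2
      have hm := masterIneq (n:ℝ) ((w i₁:ℕ):ℝ) ((w i₂:ℕ):ℝ) ((w i₃:ℕ):ℝ) (S:ℝ)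
        hnr hZ0 hZY hYX hXn hS1r hc2r hxyzr
      linarith [hm, hQ]
  · -- S ≥ 5n : easy bound
    have hc2r : 5 * (n:ℝ) ≤ (S:ℝ) := by exact_mod_cast hcase
    have hQn : ∑ i : Fin n, ((w i:ℕ):ℝ)^2 ≤ (n:ℝ) * (S:ℝ) := by
      rw [hSr', Finset.mul_sum]
      apply Finset.sum_le_sum
      intro i _
      have h1' : ((w i:ℕ) : ℝ) ≤ (n : ℝ) := Nat.cast_le.mpr (hwn i)
      have h2 : (0:ℝ) ≤ ((w i:ℕ):ℝ) := Nat.cast_nonneg _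
      nlinarith
    have hp : (0:ℝ) ≤ ((S:ℝ) - 5*n) * (n:ℝ) := mul_nonneg (by linarith) (by linarith)
    nlinarith [hQn, hp]




section Upper

variable {m : ℕ}

def zc : Fin (m+1) → Bool := fun _ => false
def uw (j : Fin (m+1)) : Fin (m+1) → Bool := fun i => decide (i = j)
def vw (j : Fin (m+1)) : Fin (m+1) → Bool := fun i => decide (i = j ∨ i = 0)

def Cn (m : ℕ) : Finset (Fin (m+1) → Bool) :=
  insert zc ((univ.image uw) ∪ ((univ.erase 0).image vw))

lemma uw_inj : Function.Injective (uw (m := m)) := by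
  intro j j' h
  have := congrFun h j
  simp [uw] at this
  exact this

lemma vw_injOn : ∀ j ∈ (univ.erase (0 : Fin (m+1))), ∀ j' ∈ (univ.erase (0 : Fin (m+1))),
    vw j = vw j' → j = j' := by
  intro j hj j' hj' h
  have hj0 : j ≠ 0 := (mem_erase.mp hj).1
  have := congrFun h j
  simp [vw] at this
  rcases this with h1 | h1
  · exact h1
  · exact absurd h1 hj0

lemma zc_ne_uw (j : Fin (m+1)) : zc ≠ uw j := by
  intro h
  have := congrFun h j
  simp [zc, uw] at this

lemma zc_ne_vw (j : Fin (m+1)) : zc ≠ vw j := by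
  intro h
  have := congrFun h j
  simp [zc, vw] at this

lemma uw_ne_vw (k j : Fin (m+1)) (hj : j ≠ 0) : uw k ≠ vw j := by
  intro h
  have h0 := congrFun h 0
  have hjj := congrFun h j
  simp [uw, vw] at h0 hjj
  exact hj (hjj.trans h0.symm)

lemma card_Cn : #(Cn m) = 2 * (m+1) := by
  rw [Cn]
  rw [card_insert_of_notMem]
  · rw [card_union_of_disjoint]
    · rw [card_image_of_injective _ uw_inj, Finset.card_image_of_injOn vw_injOn,
        card_univ, Fintype.card_fin, card_erase_of_mem (mem_univ 0), card_univ, Fintype.card_fin]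
      omega
    · rw [disjoint_left]
      intro a ha hb
      simp only [mem_image] at ha hb
      obtain ⟨k, _, hk⟩ := ha
      obtain ⟨j, hj, hjv⟩ := hb
      exact uw_ne_vw k j (mem_erase.mp hj).1 (hk ▸ hjv.symm ▸ rfl)
  · simp only [mem_union, mem_image]
    rintro (⟨j, _, hj⟩ | ⟨j, _, hj⟩)
    · exact zc_ne_uw j hj.symm
    · exact zc_ne_vw j hj.symm

lemma colw_Cn_zero : colw (Cn m) 0 = m + 1 := by
  rw [colw, Cn, filter_insert]
  rw [if_neg (by simp [zc])]
  rw [filter_union, filter_image, filter_image]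
  have h1 : (univ.filter fun j : Fin (m+1) => uw j 0 = true) = {0} := by
    ext j; simp [uw, eq_comm]
  have h2 : ((univ.erase (0:Fin (m+1))).filter fun j => vw j 0 = true) = univ.erase 0 := by
    apply filter_true_of_mem
    intro j _
    simp [vw]
  rw [h1, h2, card_union_of_disjoint]
  · rw [image_singleton, card_singleton, Finset.card_image_of_injOn vw_injOn,
      card_erase_of_mem (mem_univ 0), card_univ, Fintype.card_fin]
    omega
  · rw [disjoint_left]
    intro a ha hb
    simp only [image_singleton, mem_singleton] at ha
    simp only [mem_image] at hb
    obtain ⟨j, hj, hjv⟩ := hb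
    exact uw_ne_vw 0 j (mem_erase.mp hj).1 (ha ▸ hjv.symm ▸ rfl)

lemma colw_Cn_ne (i : Fin (m+1)) (hi : i ≠ 0) : colw (Cn m) i = 2 := by
  rw [colw, Cn, filter_insert]
  rw [if_neg (by simp [zc])]
  rw [filter_union, filter_image, filter_image]
  have h1 : (univ.filter fun j : Fin (m+1) => uw j i = true) = {i} := by
    ext j; simp [uw, eq_comm]
  have h2 : ((univ.erase (0:Fin (m+1))).filter fun j => vw j i = true) = {i} := by
    ext j
    simp only [mem_filter, mem_erase, mem_univ, true_and, and_true, mem_singleton, vw,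
      decide_eq_true_eq]
    constructor
    · rintro ⟨hj0, (h | h)⟩
      · exact h.symm
      · exact absurd h hi
    · rintro rfl
      exact ⟨hi, Or.inl rfl⟩
  rw [h1, h2, image_singleton, image_singleton, card_union_of_disjoint]
  · simp
  · rw [disjoint_left]
    intro a ha hb
    simp only [mem_singleton] at ha hb
    exact uw_ne_vw i i hi (ha ▸ hb ▸ rfl)

end Upper

lemma avgDist_nonneg (N : ℕ) (C : Finset (Fin N → Bool)) : 0 ≤ avgDist N C := by
  unfold avgDist
  apply mul_nonneg
  · positivity
  · apply Finset.sum_nonneg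
    intro c _
    apply Finset.sum_nonneg
    intro c' _
    exact Nat.cast_nonneg _

lemma bdd_below (N M : ℕ) :
    BddBelow {x : ℝ | ∃ C : Finset (Fin N → Bool), C.card = M ∧ avgDist N C = x} := by
  refine ⟨0, ?_⟩
  rintro x ⟨C, _, rfl⟩
  exact avgDist_nonneg N C

set_option maxHeartbeats 1000000 in
lemma key_any (hn : 100 ≤ n) (C : Finset (Fin n → Bool)) (hC : #C = 2 * n) :
    (10 * (n:ℝ)^2 - 26 * n) ≤ ∑ c ∈ C, ∑ c' ∈ C, (hammingDist c c' : ℝ) := by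
  classical
  set b : Fin n → Bool := fun i => decide (2 * colw C i > #C) with hbdef
  set D := C.image (flip b) with hDdef
  have hD : #D = 2 * n := by rw [hDdef, card_flip, hC]
  have hw : ∀ i, 2 * colw D i ≤ #D := by
    intro i
    rw [hD, ← hC]
    exact colw_flip_le C b (fun i => rfl) i
  have hkey := key hn D hD hw
  have heq : ∑ c ∈ C, ∑ c' ∈ C, (hammingDist c c' : ℝ)
      = ∑ c ∈ D, ∑ c' ∈ D, (hammingDist c c' : ℝ) := by
    have h1 : ∑ c ∈ D, ∑ c' ∈ D, hammingDist c c' = ∑ c ∈ C, ∑ c' ∈ C, hammingDist c c' :=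
      sum_hamming_flip C b
    have h2 : ∑ c ∈ C, ∑ c' ∈ C, (hammingDist c c' : ℝ)
        = ((∑ c ∈ C, ∑ c' ∈ C, hammingDist c c' : ℕ) : ℝ) := by push_cast; rfl
    have h3 : ∑ c ∈ D, ∑ c' ∈ D, (hammingDist c c' : ℝ)
        = ((∑ c ∈ D, ∑ c' ∈ D, hammingDist c c' : ℕ) : ℝ) := by push_cast; rfl
    rw [h2, h3, h1]
  rw [heq]
  exact hkey

lemma beta_lower (hn : 100 ≤ n) : 5/2 - 13/(2*(n:ℝ)) ≤ beta n (2*n) := by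
  have hn0 : (0:ℝ) < n := by
    have : (100:ℝ) ≤ n := by exact_mod_cast hn
    linarith
  apply le_csInf
  · have hcard : 2 * n ≤ #(univ : Finset (Fin n → Bool)) := by
      rw [card_univ, Fintype.card_fun, Fintype.card_bool, Fintype.card_fin]
      have h2 : n - 1 < 2^(n-1) := Nat.lt_two_pow_self
      have h3 : 2^(n-1+1) = 2^(n-1)*2 := pow_succ 2 (n-1)
      rw [show n-1+1 = n by omega] at h3
      omega
    obtain ⟨C, _, hCcard⟩ := Finset.exists_subset_card_eq hcard
    exact ⟨avgDist n C, C, hCcard, rfl⟩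
  · rintro x ⟨C, hC, rfl⟩
    unfold avgDist
    rw [hC]
    have hb := key_any hn C hC
    have hpos : (0:ℝ) ≤ 1 / ((2*n:ℕ):ℝ)^2 := by positivity
    calc 5/2 - 13/(2*(n:ℝ))
        = (1 / ((2*n:ℕ):ℝ)^2) * (10*(n:ℝ)^2 - 26*n) := by
          push_cast
          field_simp
          ring
      _ ≤ _ := mul_le_mul_of_nonneg_left hb hpos

lemma avgDist_Cn (m : ℕ) :
    avgDist (m+1) (Cn m) = 5/2 - (4*((m:ℝ)+1) - 2)/((m:ℝ)+1)^2 := by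
  classical
  have hsum : ∑ c ∈ Cn m, ∑ c' ∈ Cn m, hammingDist c c'
      = 2*(m+1)*(m+1) + m*(8*m) := by
    rw [dist_sum (Cn m), card_Cn]
    rw [← Finset.sum_erase_add _ _ (mem_univ (0 : Fin (m+1)))]
    have h1 : ∀ i ∈ (univ : Finset (Fin (m+1))).erase 0,
        2 * colw (Cn m) i * (2*(m+1) - colw (Cn m) i) = 8*m := by
      intro i hi
      rw [colw_Cn_ne i (mem_erase.mp hi).1]
      omega
    rw [Finset.sum_congr rfl h1, Finset.sum_const, card_erase_of_mem (mem_univ 0), card_univ,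
      Fintype.card_fin, colw_Cn_zero, smul_eq_mul]
    have h2 : 2*(m+1) - (m+1) = m+1 := by omega
    rw [h2]
    have h3 : m + 1 - 1 = m := by omega
    rw [h3]
    ring
  unfold avgDist
  rw [card_Cn]
  have hcast : ∑ c ∈ Cn m, ∑ c' ∈ Cn m, (hammingDist c c' : ℝ)
      = ((2*(m+1)*(m+1) + m*(8*m) : ℕ) : ℝ) := by
    rw [← hsum]; push_cast; rfl
  rw [hcast]
  have hm0 : ((m:ℝ)+1) ≠ 0 := by positivity
  push_cast
  field_simp
  ring

lemma beta_upper (N : ℕ) : beta N (2*N) ≤ 5/2 - (4*(N:ℝ) - 2)/(N:ℝ)^2 := by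
  cases N with
  | zero =>
      have h : avgDist 0 (∅ : Finset (Fin 0 → Bool)) = 0 := by
        unfold avgDist; simp
      have hmem : (0:ℝ) ∈ {x : ℝ | ∃ C : Finset (Fin 0 → Bool), C.card = 2*0 ∧ avgDist 0 C = x} :=
        ⟨∅, by simp, h⟩
      have hle := csInf_le (bdd_below 0 (2*0)) hmem
      have : beta 0 (2*0) ≤ 0 := hle
      refine le_trans this ?_
      norm_num
  | succ m =>
      have hmem : avgDist (m+1) (Cn m)
          ∈ {x : ℝ | ∃ C : Finset (Fin (m+1) → Bool), C.card = 2*(m+1) ∧ avgDist (m+1) C = x} :=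
        ⟨Cn m, card_Cn, rfl⟩
      have hle := csInf_le (bdd_below (m+1) (2*(m+1))) hmem
      rw [avgDist_Cn m] at hle
      refine le_trans hle ?_
      push_cast
      ring_nf
      exact le_refl _

end S19

theorem stmt_19 :
    Filter.Tendsto (fun n : ℕ => beta n (2 * n)) Filter.atTop (nhds (5 / 2)) ∧
      (∀ n : ℕ, beta n (2 * n) ≤ 5 / 2 - (4 * (n : ℝ) - 2) / (n : ℝ) ^ 2) ∧
      (∀ᶠ n : ℕ in Filter.atTop, beta n (2 * n) ≥ 5 / 2 - 13 / (2 * (n : ℝ))) := by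
  have hupper : ∀ N : ℕ, beta N (2*N) ≤ 5/2 - (4*(N:ℝ) - 2)/(N:ℝ)^2 := S19.beta_upper
  have hlower : ∀ᶠ N : ℕ in Filter.atTop, beta N (2*N) ≥ 5/2 - 13/(2*(N:ℝ)) := by
    filter_upwards [Filter.eventually_ge_atTop 100] with N hN
    exact S19.beta_lower hN
  refine ⟨?_, hupper, hlower⟩
  have hg : Filter.Tendsto (fun N : ℕ => 5/2 - 13/(2*(N:ℝ))) Filter.atTop (nhds (5/2)) := by
    have h0 : Filter.Tendsto (fun N : ℕ => (13/2)/(N:ℝ)) Filter.atTop (nhds 0) :=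
      tendsto_const_div_atTop_nhds_zero_nat (13/2)
    have heq : (fun N : ℕ => 5/2 - 13/(2*(N:ℝ))) = fun N : ℕ => 5/2 - (13/2)/(N:ℝ) := by
      funext N; rw [div_div]
    rw [heq]
    simpa using tendsto_const_nhds.sub h0
  have hh : Filter.Tendsto (fun N : ℕ => 5/2 - (4*(N:ℝ)-2)/(N:ℝ)^2) Filter.atTop (nhds (5/2)) := by
    have h4 : Filter.Tendsto (fun N : ℕ => (4:ℝ)/(N:ℝ)) Filter.atTop (nhds 0) :=
      tendsto_const_div_atTop_nhds_zero_nat 4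
    have h2 : Filter.Tendsto (fun N : ℕ => (2:ℝ)/(N:ℝ) * (1/(N:ℝ))) Filter.atTop (nhds 0) := by
      have := (tendsto_const_div_atTop_nhds_zero_nat (2:ℝ)).mul
        (tendsto_const_div_atTop_nhds_zero_nat (1:ℝ))
      simpa using this
    have heq : (fun N : ℕ => 5/2 - (4*(N:ℝ)-2)/(N:ℝ)^2)
        = fun N : ℕ => 5/2 - ((4:ℝ)/(N:ℝ) - (2:ℝ)/(N:ℝ) * (1/(N:ℝ))) := by
      funext N
      by_cases h : (N:ℝ) = 0
      · rw [h]; norm_num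
      · field_simp
    rw [heq]
    have hsub : Filter.Tendsto
        (fun N : ℕ => (5/2 : ℝ) - ((4:ℝ)/(N:ℝ) - (2:ℝ)/(N:ℝ) * (1/(N:ℝ))))
        Filter.atTop (nhds (5/2 - (0 - 0))) :=
      Filter.Tendsto.sub tendsto_const_nhds (h4.sub h2)
    simpa using hsub
  exact tendsto_of_tendsto_of_tendsto_of_le_of_le' hg hh hlower
    (Filter.Eventually.of_forall hupper)
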